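/- For every graph G, the clique-degree of G is at most ω̃(G) · (cideg(G) − 1), where the clique-degree cdeg(G) is the maximum number of other maximal cliques that intersect a fixed maximal clique of G. -/

import Mathlib

variable {V : Type} {W : Type}

/-- Two vertices are true twins: they have the same closed neighbourhood. -/
def twin (G : SimpleGraph V) (x y : V) : Prop :=
  ∀ z, (G.Adj x z ∨ x = z) ↔ (G.Adj y z ∨ y = z)

/-- The true-twin relation as a setoid. -/
def twinSetoid (G : SimpleGraph V) : Setoid V :=
  ⟨twin G, ⟨fun _ _ => Iff.rfl, fun h z => (h z).symm, fun h1 h2 z => (h1 z).trans (h2 z)⟩⟩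

/-- The quotient of `G` by the true-twin relation. -/
def quotGraph (G : SimpleGraph V) : SimpleGraph (Quotient (twinSetoid G)) where
  Adj a b := a ≠ b ∧ ∃ x y, Quotient.mk (twinSetoid G) x = a ∧
    Quotient.mk (twinSetoid G) y = b ∧ G.Adj x y
  symm := ⟨by
    rintro a b ⟨h, x, y, hx, hy, hxy⟩
    exact ⟨h.symm, y, x, hy, hx, hxy.symm⟩⟩
  loopless := ⟨by rintro a ⟨h, _⟩; exact h rfl⟩

/-- The true-twin class of a vertex. -/
def qmk (G : SimpleGraph V) (v : V) : Quotient (twinSetoid G) :=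
  Quotient.mk (twinSetoid G) v

/-- `K` is a maximal clique of `G`. -/
def MaxClique (G : SimpleGraph V) (K : Set V) : Prop :=
  G.IsClique K ∧ ∀ K', G.IsClique K' → K ⊆ K' → K' = K

/-- `S` is an independent set of `G`. -/
def IndepSet (G : SimpleGraph V) (S : Set V) : Prop :=
  ∀ x ∈ S, ∀ y ∈ S, ¬ G.Adj x y

/-- Independence number. -/
noncomputable def indepNum (G : SimpleGraph V) : ℕ :=
  sSup {n | ∃ S : Set V, IndepSet G S ∧ S.ncard = n}

/-- Clique cover number: minimum number of cliques covering all vertices. -/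
noncomputable def cliqueCoverNum (G : SimpleGraph V) : ℕ :=
  sInf {n | ∃ f : Fin n → Set V, (∀ i, G.IsClique (f i)) ∧ ∀ v, ∃ i, v ∈ f i}

/-- Closed neighbourhood. -/
def cNbhd (G : SimpleGraph V) (v : V) : Set V := insert v (G.neighborSet v)

/-- Local independence number. -/
noncomputable def alphaLoc (G : SimpleGraph V) : ℕ :=
  sSup {n | ∃ v, ∃ S ⊆ cNbhd G v, IndepSet G S ∧ S.ncard = n}

/-- Local clique cover number. -/
noncomputable def thetaLoc (G : SimpleGraph V) : ℕ :=
  sSup {n | ∃ v, cliqueCoverNum (G.induce (cNbhd G v)) = n}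

/-- Clique-incidence-degree: max number of maximal cliques containing a vertex. -/
noncomputable def cideg (G : SimpleGraph V) : ℕ :=
  sSup {n | ∃ v, {K | MaxClique G K ∧ v ∈ K}.ncard = n}

/-- Clique-incidence-diversity: max number of true-twin classes meeting a maximal clique. -/
noncomputable def cliqueIncDiv (G : SimpleGraph V) : ℕ :=
  sSup {n | ∃ K, MaxClique G K ∧ (qmk G '' K).ncard = n}

/-- Clique-degree: max number of other maximal cliques intersecting a maximal clique. -/
noncomputable def cdeg (G : SimpleGraph V) : ℕ :=
  sSup {n | ∃ K, MaxClique G K ∧ {K' | MaxClique G K' ∧ K' ≠ K ∧ (K' ∩ K).Nonempty}.ncard = n}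

/-- Maximum degree. -/
noncomputable def maxDeg (H : SimpleGraph W) : ℕ :=
  sSup {n | ∃ v, (H.neighborSet v).ncard = n}

/-- Clique number. -/
noncomputable def cliqueNum (H : SimpleGraph W) : ℕ :=
  sSup {n | ∃ K : Set W, H.IsClique K ∧ K.ncard = n}

/-- A separation of a graph. -/
def IsSep (H : SimpleGraph W) (A B : Set W) : Prop :=
  A ∪ B = Set.univ ∧ ∀ a ∈ A \ B, ∀ b ∈ B \ A, ¬ H.Adj a b

/-- A tree-decomposition. -/
structure TreeDec {ι : Type} (G : SimpleGraph V) (T : SimpleGraph ι) (β : ι → Set V) : Prop where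
  tree : T.IsTree
  cover : ∀ v, ∃ t, v ∈ β t
  edges : ∀ v w, G.Adj v w → ∃ t, v ∈ β t ∧ w ∈ β t
  subtree : ∀ v, (T.induce {t | v ∈ β t}).Connected

/-- α-treewidth (tree-independence number). -/
noncomputable def alphaTW (G : SimpleGraph V) : ℕ :=
  sInf {n | ∃ (ι : Type) (T : SimpleGraph ι) (β : ι → Set V), TreeDec G T β ∧
    ∀ t, ∀ S ⊆ β t, IndepSet G S → S.ncard ≤ n}

/-- Neighbourhood of a set of vertices (outside the set). -/
def setNbhd (G : SimpleGraph V) (K : Set V) : Set V :=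
  {v | v ∉ K ∧ ∃ x ∈ K, G.Adj v x}

/-- Diversity number of a set `K`: max size of a `K`-diverse set of neighbours. -/
noncomputable def dn (G : SimpleGraph V) (K : Set V) : ℕ :=
  sSup {n | ∃ Y ⊆ setNbhd G K,
    (∀ y1 ∈ Y, ∀ y2 ∈ Y, y1 ≠ y2 → G.neighborSet y1 ∩ K ≠ G.neighborSet y2 ∩ K) ∧ Y.ncard = n}

/-- Cutrank of a set of vertices: F₂-rank of the corresponding submatrix
of the adjacency matrix. -/
noncomputable def cutrank (G : SimpleGraph V) [Fintype V] (X : Set V) : ℕ :=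
  haveI : DecidableRel G.Adj := Classical.decRel _
  haveI : Fintype ↥X := Fintype.ofFinite _
  haveI : Fintype ↥(Xᶜ) := Fintype.ofFinite _
  (Matrix.of fun (x : ↥X) (y : ↥(Xᶜ)) => if G.Adj x.1 y.1 then (1 : ZMod 2) else 0).rank

/-- `G` admits a rank-decomposition of width at most `w`: a tree whose internal
nodes have degree 3, whose leaves are in bijection with `V(G)`, such that every
edge induces a bipartition of the vertices of cutrank at most `w`. -/
def HasRankDecompOfWidth (G : SimpleGraph V) [Fintype V] (w : ℕ) : Prop :=
  ∃ (ι : Type) (T : SimpleGraph ι) (δ : V → ι),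
    T.IsTree ∧ Function.Injective δ ∧
    (∀ t, (T.neighborSet t).ncard = 1 ↔ ∃ v, δ v = t) ∧
    (∀ t, (T.neighborSet t).ncard = 1 ∨ (T.neighborSet t).ncard = 3) ∧
    ∀ a b, T.Adj a b → cutrank G {v | (T.deleteEdges {s(a,b)}).Reachable (δ v) a} ≤ w

/-- An injective enumeration of a path that is induced in `G`. -/
def IsInducedPath (G : SimpleGraph V) {ℓ : ℕ} (x : Fin ℓ → V) : Prop :=
  Function.Injective x ∧ ∀ i j, G.Adj (x i) (x j) ↔ (i.val + 1 = j.val ∨ j.val + 1 = i.val)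


open Classical in
lemma cover_card {α ι : Type} [Finite α] (S : Set α) (C : Set ι) (F : ι → Set α)
    (hC : C.Finite) (hS : S ⊆ ⋃ i ∈ C, F i) (m : ℕ) (hF : ∀ i ∈ C, (F i).ncard ≤ m) :
    S.ncard ≤ C.ncard * m := by
  classical
  haveI := Fintype.ofFinite α
  have hSf : S.Finite := Set.toFinite _
  have hFf : ∀ i, (F i).Finite := fun i => Set.toFinite _
  have hsub : hSf.toFinset ⊆ hC.toFinset.biUnion (fun i => (hFf i).toFinset) := by
    intro a ha
    simp only [Set.Finite.mem_toFinset] at ha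
    obtain ⟨_, ⟨i, rfl⟩, hmem⟩ := hS ha
    simp only [Set.mem_iUnion] at hmem
    obtain ⟨hi, hai⟩ := hmem
    simp only [Finset.mem_biUnion, Set.Finite.mem_toFinset]
    exact ⟨i, hi, hai⟩
  calc S.ncard = hSf.toFinset.card := by rw [Set.ncard_eq_toFinset_card _ hSf]
    _ ≤ (hC.toFinset.biUnion (fun i => (hFf i).toFinset)).card := Finset.card_le_card hsub
    _ ≤ hC.toFinset.card * m := Finset.card_biUnion_le_card_mul _ _ _ (by
        intro i hi
        rw [← Set.ncard_eq_toFinset_card _ (hFf i)]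
        exact hF i (hC.mem_toFinset.mp hi))
    _ = C.ncard * m := by rw [Set.ncard_eq_toFinset_card _ hC]

lemma twin_mem_maxClique {G : SimpleGraph V} {K' : Set V} (hK' : MaxClique G K')
    {x y : V} (hx : x ∈ K') (hxy : twin G x y) : y ∈ K' := by
  by_cases hyx : y = x
  · subst hyx; exact hx
  have hcl : G.IsClique (insert y K') := by
    apply hK'.1.insert
    intro b hb hby
    by_cases hbx : b = x
    · subst hbx
      rcases (hxy b).mp (Or.inr rfl) with h | h
      · exact h
      · exact absurd h hby
    · have : G.Adj x b := hK'.1 hx hb (fun h => hbx h.symm)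
      rcases (hxy b).mp (Or.inl this) with h | h
      · exact h
      · exact absurd h hby
  have := hK'.2 (insert y K') hcl (Set.subset_insert _ _)
  rw [← this]; exact Set.mem_insert _ _

theorem stmt11 [Fintype V] (G : SimpleGraph V) :
    cdeg G ≤ cliqueIncDiv G * (cideg G - 1) := by
  classical
  apply csSup_le'
  rintro n ⟨K, hK, rfl⟩
  set C := qmk G '' K with hC
  set F : Quotient (twinSetoid G) → Set (Set V) :=
    fun q => {K' | MaxClique G K' ∧ K' ≠ K ∧ ∃ x ∈ K, qmk G x = q ∧ x ∈ K'} with hF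
  have hcover : {K' | MaxClique G K' ∧ K' ≠ K ∧ (K' ∩ K).Nonempty} ⊆ ⋃ q ∈ C, F q := by
    rintro K' ⟨h1, h2, x, hx1, hx2⟩
    refine Set.mem_biUnion ⟨x, hx2, rfl⟩ ⟨h1, h2, x, hx2, rfl, hx1⟩
  have hFbound : ∀ q ∈ C, (F q).ncard ≤ cideg G - 1 := by
    rintro q ⟨x, hxK, rfl⟩
    have hsub : F (qmk G x) ⊆ {K'' | MaxClique G K'' ∧ x ∈ K''} \ {K} := by
      rintro K' ⟨h1, h2, x', hx'K, hq, hx'K'⟩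
      have htw : twin G x' x := Quotient.exact hq
      exact ⟨⟨h1, twin_mem_maxClique h1 hx'K' htw⟩, h2⟩
    have hfin : {K'' | MaxClique G K'' ∧ x ∈ K''}.Finite := Set.toFinite _
    have hKmem : K ∈ {K'' | MaxClique G K'' ∧ x ∈ K''} := ⟨hK, hxK⟩
    have h1 : (F (qmk G x)).ncard ≤ ({K'' | MaxClique G K'' ∧ x ∈ K''} \ {K}).ncard :=
      Set.ncard_le_ncard hsub (hfin.subset Set.diff_subset)
    have h2 : ({K'' | MaxClique G K'' ∧ x ∈ K''} \ {K}).ncard =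
        {K'' | MaxClique G K'' ∧ x ∈ K''}.ncard - 1 :=
      Set.ncard_diff_singleton_of_mem hKmem
    have h3 : {K'' | MaxClique G K'' ∧ x ∈ K''}.ncard ≤ cideg G := by
      apply le_csSup
      · refine ⟨Nat.card (Set V), ?_⟩
        rintro m ⟨v, rfl⟩
        rw [← Set.ncard_univ]
        exact Set.ncard_le_ncard (Set.subset_univ _) (Set.toFinite _)
      · exact ⟨x, rfl⟩
    omega
  have hmain := cover_card _ C F (Set.toFinite _) hcover (cideg G - 1) hFbound
  refine hmain.trans (Nat.mul_le_mul_right _ ?_)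
  apply le_csSup
  · refine ⟨Nat.card (Quotient (twinSetoid G)), ?_⟩
    rintro m ⟨K', _, rfl⟩
    rw [← Set.ncard_univ]
    exact Set.ncard_le_ncard (Set.subset_univ _) (Set.toFinite _)
  · exact ⟨K, hK, rfl⟩
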